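/- The autonomous system df0/dt = {2(f1-f3)g1 - 2g2 f1 - α1 - α3} f0 + α0(f1-f3), df1/dt = {2(f0-f3)g2 - 2g1 f0 - α0 - α3} f1 + α1(f0-f3), df2/dt = {(f3-f1+3f0)g1 + (f3+3f1-f0)g2 + 1} f2 - 4 α2 g1 g2, df3/dt = -(2 f0 g1 + 2 f1 g2 + α0 + α1) f3 - α3(f0+f1), dg1/dt = (f0-f1+f3) g1² + {(f0-f1-f3) g2 + α0+α1+α3} g1 + f2(f3+3f1-f0), dg2/dt = (f1-f0+f3) g2² + {(f1-f0-f3) g1 + α0+α1+α3} g2 + f2(f3+3f0-f1) satisfies d(f3 - f0 - f1)/dt = 0; that is, f3 - (f0 + f1) is a first integral of the system. -/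

import Mathlib

/-- First integral f3 - (f0 + f1) of the A5^(2) autonomous system. -/
theorem stmt_0 (α0 α1 α2 α3 : ℂ) (hα : α0 + α1 + 2*α2 + α3 = 1/2)
    (f0 f1 f2 f3 g1 g2 : ℝ → ℂ)
    (hf0 : ∀ t, HasDerivAt f0 ((2*(f1 t - f3 t)*g1 t - 2*g2 t*f1 t - α1 - α3)*f0 t + α0*(f1 t - f3 t)) t)
    (hf1 : ∀ t, HasDerivAt f1 ((2*(f0 t - f3 t)*g2 t - 2*g1 t*f0 t - α0 - α3)*f1 t + α1*(f0 t - f3 t)) t)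
    (hf2 : ∀ t, HasDerivAt f2 (((f3 t - f1 t + 3*f0 t)*g1 t + (f3 t + 3*f1 t - f0 t)*g2 t + 1)*f2 t - 4*α2*g1 t*g2 t) t)
    (hf3 : ∀ t, HasDerivAt f3 (-(2*f0 t*g1 t + 2*f1 t*g2 t + α0 + α1)*f3 t - α3*(f0 t + f1 t)) t)
    (hg1 : ∀ t, HasDerivAt g1 ((f0 t - f1 t + f3 t)*(g1 t)^2 + ((f0 t - f1 t - f3 t)*g2 t + α0 + α1 + α3)*g1 t + f2 t*(f3 t + 3*f1 t - f0 t)) t)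
    (hg2 : ∀ t, HasDerivAt g2 ((f1 t - f0 t + f3 t)*(g2 t)^2 + ((f1 t - f0 t - f3 t)*g1 t + α0 + α1 + α3)*g2 t + f2 t*(f3 t + 3*f0 t - f1 t)) t) :
    ∀ t, HasDerivAt (fun t => f3 t - (f0 t + f1 t)) 0 t := by
  intro t
  have h := (hf3 t).sub ((hf0 t).add (hf1 t))
  convert h using 1
  all_goals first | rfl | ring
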